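/- Traveling-salesman bound on a one-dimensional manifold (Lemma 3.2 for d₁ = 1): Let M ⊆ ℝ^m be a compact connected topological 1-manifold with boundary with H¹(M) < ∞, and let X₁, …, Xₙ ∈ M. Then there exists a permutation σ of {1, …, n} such that Σ_{i=1}^{n−1} ‖X_{σ(i+1)} − X_{σ(i)}‖ ≤ H¹(M). -/

import Mathlib

open MeasureTheory Metric Set

noncomputable section

/-- `M` is a compact topological `d`-manifold with boundary: `M` is compact and
every point of `M` has an open neighborhood in `M` homeomorphic to an open subset
of the half-space `[0,∞) × ℝ^{d-1}` (for `d = 1`, the half-line `[0,∞)`). -/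
def IsCompactTopManifoldWithBoundary {E : Type*} [TopologicalSpace E] (d : ℕ)
    (M : Set E) : Prop :=
  IsCompact M ∧
  ∀ p : M, ∃ U : Set M, IsOpen U ∧ p ∈ U ∧
    ∃ V : Set {x : ℝ × EuclideanSpace ℝ (Fin (d - 1)) // 0 ≤ x.1},
      IsOpen V ∧ Nonempty (U ≃ₜ V)

/-- The length `Σ_{i=1}^{n-1} ‖x_{i+1} - x_i‖` of the polygonal path through
`x_1, …, x_n`. -/
def pathLength {E : Type*} [NormedAddCommGroup E] {n : ℕ}
    (x : Fin n → E) : ℝ :=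
  ∑ i : Fin n, if h : (i : ℕ) + 1 < n then ‖x ⟨(i : ℕ) + 1, h⟩ - x i‖ else 0

namespace TSPAux

instance : Subsingleton (EuclideanSpace ℝ (Fin 0)) :=
  ⟨fun a b => by ext i; exact i.elim0⟩

/-- The model half-line for `1`-manifolds. -/
abbrev HSp := {z : ℝ × EuclideanSpace ℝ (Fin 0) // 0 ≤ z.1}

def sig : ℝ → HSp := fun t => ⟨(max t 0, (0 : EuclideanSpace ℝ (Fin 0))), le_max_right _ _⟩

def pr : HSp → ℝ := fun w => w.val.1

theorem sig_cont : Continuous sig :=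
  Continuous.subtype_mk ((continuous_id.max continuous_const).prodMk continuous_const) _

theorem pr_cont : Continuous pr := continuous_fst.comp continuous_subtype_val

theorem sig_pr (w : HSp) : sig (pr w) = w := by
  apply Subtype.ext
  apply Prod.ext
  · exact max_eq_left w.2
  · exact Subsingleton.elim _ _

theorem pr_sig {t : ℝ} (ht : 0 ≤ t) : pr (sig t) = t := max_eq_left ht

theorem pr_nonneg (w : HSp) : 0 ≤ pr w := w.2

variable {E : Type*}

section Arc
variable [TopologicalSpace E] {M : Set E}

/-- An arc in `M` parametrized by `[a,b]`. -/
structure IsArcOn (M : Set E) (f : ℝ → E) (a b : ℝ) : Prop where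
  le : a ≤ b
  cont : ContinuousOn f (Set.Icc a b)
  inj : Set.InjOn f (Set.Icc a b)
  sub : f '' Set.Icc a b ⊆ M

theorem IsArcOn.mem (h : IsArcOn M f a b) {t : ℝ} (ht : t ∈ Set.Icc a b) : f t ∈ M :=
  h.sub ⟨t, ht, rfl⟩

theorem IsArcOn.shift (h : IsArcOn M f a b) (c : ℝ) :
    IsArcOn M (fun t => f (t - c)) (a + c) (b + c) := by
  have hmap : ∀ t ∈ Set.Icc (a + c) (b + c), t - c ∈ Set.Icc a b := by
    intro t ht; exact ⟨by linarith [ht.1], by linarith [ht.2]⟩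
  refine ⟨by linarith [h.le], ?_, ?_, ?_⟩
  · exact h.cont.comp (Continuous.continuousOn (by continuity)) hmap
  · intro x hx y hy hxy
    have := h.inj (hmap x hx) (hmap y hy) hxy
    linarith
  · rintro _ ⟨t, ht, rfl⟩; exact h.mem (hmap t ht)

theorem shift_image (f : ℝ → E) (a b c : ℝ) :
    (fun t => f (t - c)) '' Set.Icc (a + c) (b + c) = f '' Set.Icc a b := by
  ext y; constructor
  · rintro ⟨t, ht, rfl⟩; exact ⟨t - c, ⟨by linarith [ht.1], by linarith [ht.2]⟩, rfl⟩
  · rintro ⟨t, ht, rfl⟩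
    exact ⟨t + c, ⟨by linarith [ht.1], by linarith [ht.2]⟩, by simp⟩

theorem IsArcOn.reverse (h : IsArcOn M f a b) :
    IsArcOn M (fun t => f (a + b - t)) a b := by
  have hmap : ∀ t ∈ Set.Icc a b, a + b - t ∈ Set.Icc a b := by
    intro t ht; exact ⟨by linarith [ht.2], by linarith [ht.1]⟩
  refine ⟨h.le, ?_, ?_, ?_⟩
  · exact h.cont.comp (Continuous.continuousOn (by continuity)) hmap
  · intro x hx y hy hxy
    have := h.inj (hmap x hx) (hmap y hy) hxy
    linarith
  · rintro _ ⟨t, ht, rfl⟩; exact h.mem (hmap t ht)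

theorem reverse_image (f : ℝ → E) (a b : ℝ) (hab : a ≤ b) :
    (fun t => f (a + b - t)) '' Set.Icc a b = f '' Set.Icc a b := by
  ext y; constructor
  · rintro ⟨t, ht, rfl⟩; exact ⟨a + b - t, ⟨by linarith [ht.2], by linarith [ht.1]⟩, rfl⟩
  · rintro ⟨t, ht, rfl⟩
    exact ⟨a + b - t, ⟨by linarith [ht.2], by linarith [ht.1]⟩, by ring_nf⟩

theorem IsArcOn.subarc (h : IsArcOn M f a b) {c d : ℝ} (hcd : c ≤ d)
    (hsub : Set.Icc c d ⊆ Set.Icc a b) : IsArcOn M f c d :=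
  ⟨hcd, h.cont.mono hsub, h.inj.mono hsub, (Set.image_mono (f := f) hsub).trans h.sub⟩

/-- Pasting two arcs meeting only at the common endpoint. -/
theorem IsArcOn.concat {f g : ℝ → E} {a b c : ℝ}
    (hf : IsArcOn M f a b) (hg : IsArcOn M g b c) (hfg : f b = g b)
    (hint : f '' Set.Icc a b ∩ g '' Set.Icc b c ⊆ {f b}) :
    IsArcOn M (fun t => if t ≤ b then f t else g t) a c ∧
      (fun t => if t ≤ b then f t else g t) '' Set.Icc a c
        = f '' Set.Icc a b ∪ g '' Set.Icc b c := by
  have hab := hf.le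
  have hbc := hg.le
  set F : ℝ → E := fun t => if t ≤ b then f t else g t with hF
  have hFf : ∀ t ∈ Set.Icc a b, F t = f t := fun t ht => if_pos ht.2
  have hFg : ∀ t ∈ Set.Icc b c, F t = g t := by
    intro t ht
    rcases le_or_gt t b with h | h
    · have : t = b := le_antisymm h ht.1
      simp [hF, this, hfg]
    · simp [hF, not_le.2 h]
  have hunion : Set.Icc a c ⊆ Set.Icc a b ∪ Set.Icc b c := by
    intro t ht
    rcases le_or_gt t b with h | h
    · exact Or.inl ⟨ht.1, h⟩
    · exact Or.inr ⟨h.le, ht.2⟩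
  have hcont : ContinuousOn F (Set.Icc a c) := by
    intro x hx
    rcases lt_trichotomy x b with hxb | hxb | hxb
    · have h1 : ContinuousWithinAt f (Set.Icc a c ∩ Set.Iio b) x := by
        refine (hf.cont x ⟨hx.1, hxb.le⟩).mono ?_
        intro t ht; exact ⟨ht.1.1, ht.2.le⟩
      have h2 : ContinuousWithinAt F (Set.Icc a c ∩ Set.Iio b) x := by
        refine h1.congr (fun t ht => ?_) (by simp [hF, hxb.le])
        exact if_pos ht.2.le
      exact (continuousWithinAt_inter (Iio_mem_nhds hxb)).1 h2
    · have h1 : ContinuousWithinAt F (Set.Icc a b) x := by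
        rw [hxb]
        exact (hf.cont b ⟨hab, le_rfl⟩).congr hFf (by simp [hF])
      have h2 : ContinuousWithinAt F (Set.Icc b c) x := by
        rw [hxb]
        exact (hg.cont b ⟨le_rfl, hbc⟩).congr hFg (by simp [hF, hfg])
      exact (h1.union h2).mono hunion
    · have h1 : ContinuousWithinAt g (Set.Icc a c ∩ Set.Ioi b) x := by
        refine (hg.cont x ⟨hxb.le, hx.2⟩).mono ?_
        intro t ht; exact ⟨ht.2.le, ht.1.2⟩
      have h2 : ContinuousWithinAt F (Set.Icc a c ∩ Set.Ioi b) x := by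
        refine h1.congr (fun t ht => ?_) (by simp [hF, not_le.2 hxb])
        exact if_neg (not_le.2 ht.2)
      exact (continuousWithinAt_inter (Ioi_mem_nhds hxb)).1 h2
  have himg : F '' Set.Icc a c = f '' Set.Icc a b ∪ g '' Set.Icc b c := by
    apply Set.Subset.antisymm
    · rintro _ ⟨t, ht, rfl⟩
      rcases hunion ht with h | h
      · exact Or.inl ⟨t, h, (hFf t h).symm⟩
      · exact Or.inr ⟨t, h, (hFg t h).symm⟩
    · rintro y (⟨t, ht, rfl⟩ | ⟨t, ht, rfl⟩)
      · exact ⟨t, ⟨ht.1, ht.2.trans hbc⟩, hFf t ht⟩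
      · exact ⟨t, ⟨hab.trans ht.1, ht.2⟩, hFg t ht⟩
  have hinj : Set.InjOn F (Set.Icc a c) := by
    intro x hx y hy hxy
    rcases hunion hx with h1 | h1 <;> rcases hunion hy with h2 | h2
    · exact hf.inj h1 h2 (by rwa [hFf x h1, hFf y h2] at hxy)
    · rw [hFf x h1, hFg y h2] at hxy
      have : f x ∈ f '' Set.Icc a b ∩ g '' Set.Icc b c :=
        ⟨⟨x, h1, rfl⟩, ⟨y, h2, hxy.symm⟩⟩
      have hx_eq : x = b := hf.inj h1 ⟨hab, le_rfl⟩ (hint this)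
      have : g y = g b := by rw [← hxy, hx_eq, hfg]
      have hy_eq : y = b := hg.inj h2 ⟨le_rfl, hbc⟩ this
      rw [hx_eq, hy_eq]
    · rw [hFg x h1, hFf y h2] at hxy
      have : f y ∈ f '' Set.Icc a b ∩ g '' Set.Icc b c :=
        ⟨⟨y, h2, rfl⟩, ⟨x, h1, hxy⟩⟩
      have hy_eq : y = b := hf.inj h2 ⟨hab, le_rfl⟩ (hint this)
      have : g x = g b := by rw [hxy, hy_eq, hfg]
      have hx_eq : x = b := hg.inj h1 ⟨le_rfl, hbc⟩ this
      rw [hx_eq, hy_eq]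
    · exact hg.inj h1 h2 (by rwa [hFg x h1, hFg y h2] at hxy)
  refine ⟨⟨hab.trans hbc, hcont, hinj, ?_⟩, himg⟩
  rw [himg]
  exact Set.union_subset hf.sub hg.sub

end Arc

section Chart
variable [TopologicalSpace E] {M : Set E}

/-- Relative openness via local neighborhoods. -/
theorem relopen_of_local {A M : Set E} (hAM : A ⊆ M)
    (h : ∀ y ∈ A, ∃ W, IsOpen W ∧ y ∈ W ∧ W ∩ M ⊆ A) :
    ∃ W, IsOpen W ∧ A = W ∩ M := by
  choose! W hopen hmem hsub using h
  refine ⟨⋃ y ∈ A, W y, isOpen_biUnion fun y hy => hopen y hy, ?_⟩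
  apply Set.Subset.antisymm
  · intro z hz
    exact ⟨Set.mem_biUnion hz (hmem z hz), hAM hz⟩
  · rintro z ⟨hz1, hz2⟩
    rcases Set.mem_iUnion₂.1 hz1 with ⟨y, hy, hzy⟩
    exact hsub y hy ⟨hzy, hz2⟩

/-- Flattened chart at a point of a 1-manifold. -/
theorem exists_chart (hMan : IsCompactTopManifoldWithBoundary 1 M)
    {x : E} (hx : x ∈ M) :
    ∃ (g : ℝ → E) (h : E → ℝ) (C : Set ℝ) (W : Set E),
      IsOpen W ∧ x ∈ W ∧ g '' C = W ∩ M ∧ IsPreconnected C ∧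
      h x ∈ C ∧ ContinuousOn g C ∧ ContinuousOn h (W ∩ M) ∧
      (∀ t ∈ C, h (g t) = t) ∧ (∀ y ∈ W ∩ M, g (h y) = y) := by
  classical
  obtain ⟨U, hUopen, hpU, V, hVopen, ⟨e⟩⟩ := hMan.2 ⟨x, hx⟩
  obtain ⟨W, hWopen, hWU⟩ := isOpen_induced_iff.1 hUopen
  have hA : Subtype.val '' U = W ∩ M := by
    rw [← hWU, Subtype.image_preimage_coe]
    exact Set.inter_comm _ _
  have hAM : W ∩ M ⊆ M := Set.inter_subset_right
  have hxA : x ∈ W ∩ M := by rw [← hA]; exact ⟨⟨x, hx⟩, hpU, rfl⟩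
  set g : ℝ → E := fun t =>
    if h0 : sig t ∈ V then (((e.symm ⟨sig t, h0⟩ : U) : M) : E) else x with hgdef
  set h : E → ℝ := fun y =>
    if hy : ∃ hm : y ∈ M, (⟨y, hm⟩ : M) ∈ U then
      pr ((e ⟨⟨y, hy.choose⟩, hy.choose_spec⟩ : V) : HSp) else 0 with hhdef
  set C₀ : Set ℝ := pr '' V with hC₀def
  have hC₀pos : C₀ ⊆ Set.Ici 0 := by
    rintro _ ⟨w, _, rfl⟩; exact w.2
  have hσV : ∀ t ∈ C₀, sig t ∈ V := by
    rintro _ ⟨w, hw, rfl⟩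
    rw [sig_pr w]; exact hw
  -- membership condition for h
  have hmemU : ∀ y ∈ W ∩ M, ∃ hm : y ∈ M, (⟨y, hm⟩ : M) ∈ U := by
    intro y hy
    rw [← hA] at hy
    rcases hy with ⟨u, hu, rfl⟩
    exact ⟨u.2, by simpa using hu⟩
  -- h maps A into C₀
  have hhmem : ∀ y ∈ W ∩ M, h y ∈ C₀ := by
    intro y hy
    have hc := hmemU y hy
    rw [hhdef]; simp only [dif_pos hc]
    exact ⟨_, (e ⟨⟨y, hc.choose⟩, hc.choose_spec⟩).2, rfl⟩
  -- g on C₀ : computation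
  have hgval : ∀ t ∈ C₀, ∀ (hV : sig t ∈ V),
      g t = (((e.symm ⟨sig t, hV⟩ : U) : M) : E) := by
    intro t _ hV
    rw [hgdef]; simp only [dif_pos hV]
  -- h ∘ g = id on C₀
  have hhg : ∀ t ∈ C₀, h (g t) = t := by
    intro t ht
    have hV := hσV t ht
    rw [hgval t ht hV]
    set u : U := e.symm ⟨sig t, hV⟩ with hu
    have hm : ((u : M) : E) ∈ M := (u : M).2
    have hcond : ∃ hm : ((u : M) : E) ∈ M, (⟨((u : M) : E), hm⟩ : M) ∈ U :=
      ⟨hm, by simpa using u.2⟩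
    rw [hhdef]; simp only [dif_pos hcond]
    have he : (⟨⟨((u : M) : E), hcond.choose⟩, hcond.choose_spec⟩ : U) = u := by
      apply Subtype.ext; apply Subtype.ext; rfl
    rw [he, hu, Homeomorph.apply_symm_apply]
    exact pr_sig (hC₀pos ht)
  -- g ∘ h = id on A
  have hgh : ∀ y ∈ W ∩ M, g (h y) = y := by
    intro y hy
    have hc := hmemU y hy
    rw [hhdef]; simp only [dif_pos hc]
    set v : V := e ⟨⟨y, hc.choose⟩, hc.choose_spec⟩ with hv
    have hVmem : sig (pr (v : HSp)) ∈ V := by rw [sig_pr]; exact v.2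
    rw [hgdef]; simp only [dif_pos hVmem]
    have : (⟨sig (pr (v : HSp)), hVmem⟩ : V) = v := by
      apply Subtype.ext; exact sig_pr _
    rw [this, hv, Homeomorph.symm_apply_apply]
  -- image of g on C₀
  have hgC₀ : g '' C₀ = W ∩ M := by
    apply Set.Subset.antisymm
    · rintro _ ⟨t, ht, rfl⟩
      have hV := hσV t ht
      rw [hgval t ht hV, ← hA]
      exact ⟨_, (e.symm ⟨sig t, hV⟩).2, rfl⟩
    · intro y hy
      exact ⟨h y, hhmem y hy, hgh y hy⟩
  -- continuity of g on C₀
  have hgcont : ContinuousOn g C₀ := by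
    rw [continuousOn_iff_continuous_restrict]
    have heq : C₀.domRestrict g = fun t : C₀ =>
        (((e.symm ⟨sig (t : ℝ), hσV t t.2⟩ : U) : M) : E) := by
      funext t
      exact hgval t t.2 (hσV t t.2)
    rw [heq]
    have h1 : Continuous (fun t : C₀ => (⟨sig (t : ℝ), hσV t t.2⟩ : V)) :=
      Continuous.subtype_mk (sig_cont.comp continuous_subtype_val) _
    exact continuous_subtype_val.comp (continuous_subtype_val.comp
      (e.symm.continuous.comp h1))
  -- continuity of h on A
  have hhcont : ContinuousOn h (W ∩ M) := by
    rw [continuousOn_iff_continuous_restrict]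
    have heq : (W ∩ M).domRestrict h = fun y : (W ∩ M : Set E) =>
        pr ((e ⟨⟨(y : E), (hmemU y y.2).choose⟩,
          (hmemU y y.2).choose_spec⟩ : V) : HSp) := by
      funext y
      have hc := hmemU y y.2
      simp only [Set.domRestrict_apply, hhdef, dif_pos hc]
    rw [heq]
    have h1 : Continuous (fun y : (W ∩ M : Set E) =>
        (⟨⟨(y : E), (hmemU y y.2).choose⟩, (hmemU y y.2).choose_spec⟩ : U)) :=
      Continuous.subtype_mk (Continuous.subtype_mk continuous_subtype_val _) _
    exact pr_cont.comp (continuous_subtype_val.comp (e.continuous.comp h1))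
  -- C₀ is relatively open in [0,∞)
  obtain ⟨N, hNopen, hNV⟩ := isOpen_induced_iff.1 hVopen
  set O : Set ℝ := (fun t : ℝ => ((max t 0, (0 : EuclideanSpace ℝ (Fin 0))) : ℝ × EuclideanSpace ℝ (Fin 0))) ⁻¹' N with hOdef
  have hOopen : IsOpen O :=
    hNopen.preimage ((continuous_id.max continuous_const).prodMk continuous_const)
  have hC₀O : C₀ = O ∩ Set.Ici 0 := by
    apply Set.Subset.antisymm
    · intro t ht
      refine ⟨?_, hC₀pos ht⟩
      have hV := hσV t ht
      rw [← hNV] at hV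
      exact hV
    · rintro t ⟨htO, htpos⟩
      have : sig t ∈ V := by rw [← hNV]; exact htO
      exact ⟨sig t, this, pr_sig htpos⟩
  -- pass to the connected component of h x
  have hhxC₀ : h x ∈ C₀ := hhmem x hxA
  set C : Set ℝ := connectedComponentIn C₀ (h x) with hCdef
  have hCsub : C ⊆ C₀ := connectedComponentIn_subset _ _
  have hCconn : IsPreconnected C := isPreconnected_connectedComponentIn
  have hhxC : h x ∈ C := mem_connectedComponentIn hhxC₀
  -- C is relatively open in C₀
  have hCrel : ∀ t ∈ C, ∃ ε > 0, ball t ε ∩ C₀ ⊆ C := by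
    intro t htC
    have htC₀ : t ∈ C₀ := hCsub htC
    have htO : t ∈ O := (hC₀O ▸ htC₀).1
    obtain ⟨δ, hδpos, hδ⟩ := Metric.isOpen_iff.1 hOopen t htO
    have htpos : (0:ℝ) ≤ t := hC₀pos htC₀
    rcases eq_or_lt_of_le htpos with heq | hlt
    · -- t = 0
      refine ⟨δ, hδpos, ?_⟩
      have hsub : Set.Ico 0 δ ⊆ C₀ := by
        intro z hz
        rw [hC₀O]
        refine ⟨hδ ?_, hz.1⟩
        rw [mem_ball, Real.dist_eq, ← heq, sub_zero, abs_of_nonneg hz.1]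
        exact hz.2
      have hCeq : C = connectedComponentIn C₀ t := connectedComponentIn_eq htC
      have hIcoC : Set.Ico 0 δ ⊆ C := by
        rw [hCeq]
        apply IsPreconnected.subset_connectedComponentIn isPreconnected_Ico _ hsub
        exact ⟨le_of_eq heq, heq ▸ hδpos⟩
      intro z hz
      apply hIcoC
      have hz0 : (0:ℝ) ≤ z := hC₀pos hz.2
      have : |z - t| < δ := by rw [← Real.dist_eq]; exact hz.1
      constructor
      · exact hz0
      · rw [← heq] at this; rw [abs_of_nonneg (by linarith : (0:ℝ) ≤ z - 0)] at this; linarith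
    · -- t > 0
      refine ⟨min δ t, lt_min hδpos hlt, ?_⟩
      have hballsub : ball t (min δ t) ⊆ C₀ := by
        intro z hz
        rw [mem_ball, Real.dist_eq] at hz
        have h1 : |z - t| < δ := lt_of_lt_of_le hz (min_le_left _ _)
        have h2 : |z - t| < t := lt_of_lt_of_le hz (min_le_right _ _)
        have hz0 : 0 < z := by
          rcases abs_lt.1 h2 with ⟨hl, _⟩; linarith
        rw [hC₀O]
        exact ⟨hδ (by rw [mem_ball, Real.dist_eq]; exact h1), le_of_lt hz0⟩
      have hCeq : C = connectedComponentIn C₀ t := connectedComponentIn_eq htC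
      have : ball t (min δ t) ⊆ C := by
        rw [hCeq]
        apply IsPreconnected.subset_connectedComponentIn _ _ hballsub
        · rw [Real.ball_eq_Ioo]; exact isPreconnected_Ioo
        · exact mem_ball_self (lt_min hδpos hlt)
      exact fun z hz => this hz.1
  -- the image of C is relatively open in M
  have hgCsub : g '' C ⊆ W ∩ M := by
    rw [← hgC₀]; exact Set.image_mono hCsub
  obtain ⟨W₂, hW₂open, hW₂⟩ : ∃ W₂, IsOpen W₂ ∧ g '' C = W₂ ∩ M := by
    apply relopen_of_local (fun y hy => hAM (hgCsub hy))
    rintro _ ⟨t, htC, rfl⟩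
    have htC₀ : t ∈ C₀ := hCsub htC
    obtain ⟨ε, hεpos, hε⟩ := hCrel t htC
    have hyA : g t ∈ W ∩ M := hgCsub ⟨t, htC, rfl⟩
    have hht : h (g t) = t := hhg t htC₀
    have hball : ball t ε ∈ nhds (h (g t)) := by
      rw [hht]; exact ball_mem_nhds _ hεpos
    have hpre : h ⁻¹' (ball t ε) ∈ nhdsWithin (g t) (W ∩ M) :=
      hhcont (g t) hyA hball
    obtain ⟨N, hNopen2, hyN, hNsub⟩ := mem_nhdsWithin.1 hpre
    refine ⟨N ∩ W, hNopen2.inter hWopen, ⟨hyN, hyA.1⟩, ?_⟩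
    rintro z ⟨⟨hzN, hzW⟩, hzM⟩
    have hzA : z ∈ W ∩ M := ⟨hzW, hzM⟩
    have hz1 : h z ∈ ball t ε := hNsub ⟨hzN, hzA⟩
    have hz2 : h z ∈ C := hε ⟨hz1, hhmem z hzA⟩
    exact ⟨h z, hz2, hgh z hzA⟩
  have hxgC : x ∈ g '' C := ⟨h x, hhxC, hgh x hxA⟩
  refine ⟨g, h, C, W₂, hW₂open, ?_, hW₂, hCconn, hhxC, hgcont.mono hCsub, ?_, ?_, ?_⟩
  · rw [hW₂] at hxgC; exact hxgC.1
  · rw [← hW₂]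
    exact hhcont.mono hgCsub
  · exact fun t ht => hhg t (hCsub ht)
  · rw [← hW₂]
    exact fun y hy => hgh y (hgCsub hy)

end Chart

section Topo
variable [MetricSpace E] {M : Set E}

/-- First hitting point of a closed set along an arc. -/
theorem first_hit {f : ℝ → E} {a b : ℝ} (hf : IsArcOn M f a b) {K : Set E}
    (hK : IsClosed K) (hb : f b ∈ K) (ha : f a ∉ K) :
    ∃ t₀ ∈ Set.Ioc a b, f t₀ ∈ K ∧ ∀ t ∈ Set.Ico a t₀, f t ∉ K := by
  set T : Set ℝ := Set.Icc a b ∩ f ⁻¹' K with hT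
  have hTclosed : IsClosed T := by
    have := hf.cont
    exact ContinuousOn.preimage_isClosed_of_isClosed this isClosed_Icc hK
  have hTne : T.Nonempty := ⟨b, ⟨hf.le, le_rfl⟩, hb⟩
  have hTbdd : BddBelow T := ⟨a, fun t ht => ht.1.1⟩
  set t₀ := sInf T with ht₀
  have ht₀T : t₀ ∈ T := hTclosed.csInf_mem hTne hTbdd
  have hat₀ : a < t₀ := by
    rcases lt_or_eq_of_le ht₀T.1.1 with h | h
    · exact h
    · exact absurd (h ▸ ht₀T.2) ha
  refine ⟨t₀, ⟨hat₀, ht₀T.1.2⟩, ht₀T.2, ?_⟩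
  intro t ht htK
  have : t₀ ≤ t := csInf_le hTbdd ⟨⟨ht.1, le_trans ht.2.le ht₀T.1.2⟩, htK⟩
  exact absurd ht.2 (not_lt.2 this)

/-- A monotone segment inside a chart gives an arc from `g s` to `g t`. -/
theorem chart_arc {g : ℝ → E} {C : Set ℝ} {A : Set E}
    (hgC : g '' C = A) (hCconn : IsPreconnected C) (hgcont : ContinuousOn g C)
    (hAM : A ⊆ M) (hinj : ∀ t ∈ C, ∀ t' ∈ C, g t = g t' → t = t')
    {s t : ℝ} (hs : s ∈ C) (ht : t ∈ C) (hst : s ≠ t) :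
    ∃ (β : ℝ → E) (a b : ℝ), a < b ∧ IsArcOn M β a b ∧ β a = g s ∧ β b = g t ∧
      β '' Set.Icc a b ⊆ A := by
  have hOC : Set.OrdConnected C := hCconn.ordConnected
  have hsegarc : ∀ u v : ℝ, u ∈ C → v ∈ C → u < v → IsArcOn M g u v ∧
      g '' Set.Icc u v ⊆ A := by
    intro u v hu hv huv
    have hsub : Set.Icc u v ⊆ C := hOC.out hu hv
    refine ⟨⟨huv.le, hgcont.mono hsub, ?_, ?_⟩, ?_⟩
    · intro z hz w hw hzw
      exact hinj z (hsub hz) w (hsub hw) hzw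
    · refine (Set.image_mono hsub).trans ?_
      rw [hgC]; exact hAM
    · rw [← hgC]; exact Set.image_mono hsub
  rcases lt_or_gt_of_ne hst with h | h
  · obtain ⟨harc, himg⟩ := hsegarc s t hs ht h
    exact ⟨g, s, t, h, harc, rfl, rfl, himg⟩
  · obtain ⟨harc, himg⟩ := hsegarc t s ht hs h
    refine ⟨fun z => g (t + s - z), t, s, h, harc.reverse, by simp, by simp, ?_⟩
    rw [reverse_image g t s h.le]
    exact himg

/-- No third branch can arrive at an interior point of an arc. -/
theorem no_branch (hMan : IsCompactTopManifoldWithBoundary 1 M)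
    {α : ℝ → E} {a b : ℝ} (hα : IsArcOn M α a b)
    {β : ℝ → E} {c d : ℝ} (hβ : IsArcOn M β c d) (hcd : c < d)
    {s : ℝ} (hs : s ∈ Set.Icc a b) (hq : β d = α s)
    (hdisj : ∀ t ∈ Set.Ico c d, β t ∉ α '' Set.Icc a b) :
    s = a ∨ s = b := by
  by_contra hcon
  push_neg at hcon
  have hsa : a < s := lt_of_le_of_ne hs.1 (Ne.symm hcon.1)
  have hsb : s < b := lt_of_le_of_ne hs.2 hcon.2
  have hqM : α s ∈ M := hα.mem hs
  obtain ⟨g, h, C, W, hWopen, hqW, hgC, hCconn, -, hgcont, hhcont, hhg, hgh⟩ :=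
    exists_chart hMan hqM
  -- find ε with α '' [s-ε,s+ε] ⊆ W ∩ M
  have hcw : ContinuousWithinAt α (Set.Icc a b) s := hα.cont s hs
  have hWnhds : W ∈ nhds (α s) := hWopen.mem_nhds hqW
  obtain ⟨δ, hδpos, hδ⟩ := Metric.mem_nhdsWithin_iff.1 (hcw hWnhds)
  set ε : ℝ := min (δ/2) (min (s - a) (b - s)) with hε
  have hεpos : 0 < ε := lt_min (by linarith) (lt_min (by linarith) (by linarith))
  have hIsub : Set.Icc (s - ε) (s + ε) ⊆ Set.Icc a b := by
    intro z hz
    have h1 : ε ≤ s - a := le_trans (min_le_right _ _) (min_le_left _ _)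
    have h2 : ε ≤ b - s := le_trans (min_le_right _ _) (min_le_right _ _)
    exact ⟨by linarith [hz.1], by linarith [hz.2]⟩
  have hIW : ∀ z ∈ Set.Icc (s - ε) (s + ε), α z ∈ W ∩ M := by
    intro z hz
    refine ⟨hδ ⟨?_, hIsub hz⟩, hα.mem (hIsub hz)⟩
    rw [mem_ball, Real.dist_eq]
    have h1 : ε ≤ δ/2 := min_le_left _ _
    have habs : |z - s| ≤ ε := abs_le.2 ⟨by linarith [hz.1], by linarith [hz.2]⟩
    exact lt_of_le_of_lt habs (by linarith)
  set I : Set ℝ := Set.Icc (s - ε) (s + ε) with hI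
  set φ : ℝ → ℝ := fun z => h (α z) with hφ
  have hsI : s ∈ I := ⟨by linarith, by linarith⟩
  have hmI : s - ε ∈ I := ⟨le_rfl, by linarith⟩
  have hpI : s + ε ∈ I := ⟨by linarith, le_rfl⟩
  have hφcont : ContinuousOn φ I :=
    ContinuousOn.comp hhcont (hα.cont.mono hIsub) hIW
  have hφinj : ∀ z ∈ I, ∀ z' ∈ I, φ z = φ z' → z = z' := by
    intro z hz z' hz' hzz
    have h2 := congrArg g hzz
    simp only [hφ] at h2
    rw [hgh _ (hIW z hz), hgh _ (hIW z' hz')] at h2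
    exact hα.inj (hIsub hz) (hIsub hz') h2
  set u : ℝ := φ (s - ε) with hu
  set v : ℝ := φ (s + ε) with hv
  set w : ℝ := φ s with hw
  have hwu : w ≠ u := fun hh => by
    have := hφinj s hsI (s - ε) hmI hh
    linarith
  have hwv : w ≠ v := fun hh => by
    have := hφinj s hsI (s + ε) hpI hh
    linarith
  have haux : ∀ y : ℝ, y ≠ w → y ∈ Set.uIcc u w → y ∈ Set.uIcc w v → False := by
    intro y hyw h1 h2
    have hc1 : ContinuousOn φ (Set.uIcc (s - ε) s) := by
      apply hφcont.mono
      rw [Set.uIcc_of_le (by linarith : s - ε ≤ s)]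
      exact fun z hz => ⟨hz.1, by linarith [hz.2]⟩
    have hc2 : ContinuousOn φ (Set.uIcc s (s + ε)) := by
      apply hφcont.mono
      rw [Set.uIcc_of_le (by linarith : s ≤ s + ε)]
      exact fun z hz => ⟨by linarith [hz.1], hz.2⟩
    obtain ⟨z₁, hz₁, hφz₁⟩ := intermediate_value_uIcc hc1 h1
    obtain ⟨z₂, hz₂, hφz₂⟩ := intermediate_value_uIcc hc2 h2
    rw [Set.uIcc_of_le (by linarith : s - ε ≤ s)] at hz₁
    rw [Set.uIcc_of_le (by linarith : s ≤ s + ε)] at hz₂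
    have hz₁I : z₁ ∈ I := ⟨hz₁.1, by linarith [hz₁.2]⟩
    have hz₂I : z₂ ∈ I := ⟨by linarith [hz₂.1], hz₂.2⟩
    have : z₁ = z₂ := hφinj z₁ hz₁I z₂ hz₂I (by rw [hφz₁, hφz₂])
    have hz₁s : z₁ = s := le_antisymm hz₁.2 (this ▸ hz₂.1)
    exact hyw (by rw [← hφz₁, hz₁s])
  have hbet : min u v < w ∧ w < max u v := by
    rcases lt_trichotomy w (min u v) with hlt | heqq | hgt
    · exfalso
      refine haux ((w + min u v)/2) (by intro hh; linarith) ?_ ?_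
      · apply Set.mem_uIcc.2
        right
        constructor
        · linarith
        · have := min_le_left u v; linarith
      · apply Set.mem_uIcc.2
        left
        constructor
        · linarith
        · have := min_le_right u v; linarith
    · exfalso
      rcases min_cases u v with ⟨hmin, _⟩ | ⟨hmin, _⟩
      · exact hwu (by rw [heqq, hmin])
      · exact hwv (by rw [heqq, hmin])
    · rcases lt_trichotomy (max u v) w with hlt2 | heqq2 | hgt2
      · exfalso
        refine haux ((max u v + w)/2) (by intro hh; linarith) ?_ ?_
        · apply Set.mem_uIcc.2
          left
          constructor
          · have := le_max_left u v; linarith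
          · linarith
        · apply Set.mem_uIcc.2
          right
          constructor
          · have := le_max_right u v; linarith
          · linarith
      · exfalso
        rcases max_cases u v with ⟨hmax, _⟩ | ⟨hmax, _⟩
        · exact hwu (by rw [← heqq2, hmax])
        · exact hwv (by rw [← heqq2, hmax])
      · exact ⟨hgt, hgt2⟩
  set δ' : ℝ := min (w - min u v) (max u v - w) with hδ'
  have hδ'pos : 0 < δ' := lt_min (by linarith [hbet.1]) (by linarith [hbet.2])
  -- find t ∈ [c, d) with β t ∈ W ∩ M and h (β t) close to w
  have hβdW : β d ∈ W ∩ M := by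
    rw [hq]
    exact hIW s hsI
  have hhβd : h (β d) = w := by rw [hq]
  obtain ⟨r₂, hr₂pos, hr₂⟩ := Metric.mem_nhdsWithin_iff.1
    ((hhcont (β d) hβdW).preimage_mem_nhdsWithin
      (by rw [hhβd]; exact ball_mem_nhds _ hδ'pos))
  have hcwd : ContinuousWithinAt β (Set.Icc c d) d := hβ.cont d ⟨hcd.le, le_rfl⟩
  obtain ⟨r₁, hr₁pos, hr₁⟩ := Metric.mem_nhdsWithin_iff.1
    (hcwd.preimage_mem_nhdsWithin (hWopen.mem_nhds (by rw [hq]; exact hqW)))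
  obtain ⟨r₃, hr₃pos, hr₃⟩ := Metric.mem_nhdsWithin_iff.1
    (hcwd.preimage_mem_nhdsWithin (Metric.ball_mem_nhds _ hr₂pos))
  set t : ℝ := max c (d - min r₁ r₃ / 2) with ht
  have hrmin : 0 < min r₁ r₃ := lt_min hr₁pos hr₃pos
  have htIco : t ∈ Set.Ico c d := by
    constructor
    · exact le_max_left _ _
    · apply max_lt hcd
      linarith
  have htIcc : t ∈ Set.Icc c d := ⟨htIco.1, htIco.2.le⟩
  have htd : |t - d| < min r₁ r₃ := by
    have h1 : d - min r₁ r₃ / 2 ≤ t := le_max_right _ _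
    rw [abs_of_nonpos (by linarith [htIco.2] : t - d ≤ 0)]
    linarith
  have hβtW : β t ∈ W := by
    apply hr₁
    refine ⟨?_, htIcc⟩
    rw [mem_ball, Real.dist_eq]
    exact lt_of_lt_of_le htd (min_le_left _ _)
  have hβtWM : β t ∈ W ∩ M := ⟨hβtW, hβ.mem htIcc⟩
  have hβtball : β t ∈ ball (β d) r₂ := by
    apply hr₃
    refine ⟨?_, htIcc⟩
    rw [mem_ball, Real.dist_eq]
    exact lt_of_lt_of_le htd (min_le_right _ _)
  have hhβt : h (β t) ∈ ball w δ' := hr₂ ⟨hβtball, hβtWM⟩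
  -- use IVT to land in the α-image
  set y : ℝ := h (β t) with hy
  have hyuv : y ∈ Set.uIcc u v := by
    rw [mem_ball, Real.dist_eq] at hhβt
    have h1 : |y - w| < δ' := hhβt
    rcases abs_lt.1 h1 with ⟨hl, hr⟩
    have h2 : δ' ≤ w - min u v := min_le_left _ _
    have h3 : δ' ≤ max u v - w := min_le_right _ _
    rcases le_total u v with huv | huv
    · rw [Set.uIcc_of_le huv]
      rw [min_eq_left huv] at h2
      rw [max_eq_right huv] at h3
      exact ⟨by linarith, by linarith⟩
    · rw [Set.uIcc_of_ge huv]
      rw [min_eq_right huv] at h2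
      rw [max_eq_left huv] at h3
      exact ⟨by linarith, by linarith⟩
  have hφI : ContinuousOn φ (Set.uIcc (s - ε) (s + ε)) := by
    apply hφcont.mono
    rw [Set.uIcc_of_le (by linarith : s - ε ≤ s + ε)]
  obtain ⟨z, hzI, hφz⟩ := intermediate_value_uIcc hφI hyuv
  rw [Set.uIcc_of_le (by linarith : s - ε ≤ s + ε)] at hzI
  have : β t = α z := by
    have h1 : g y = β t := hgh _ hβtWM
    have h2 : g (φ z) = α z := hgh _ (hIW z hzI)
    rw [← h1, ← hφz, h2]
  exact hdisj t htIco ⟨z, hIsub hzI, this.symm⟩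


/-- Tail packaging: every point of `S` has a closed "route" to `q`. -/
theorem route_exists {q y₀ : E} (hy₀M : y₀ ∈ M) (hq : q ∈ M)
    (hy₀ : y₀ = q ∨ ∃ f a b, a < b ∧ IsArcOn M f a b ∧ f a = y₀ ∧ f b = q) :
    ∃ K : Set E, IsClosed K ∧ y₀ ∈ K ∧ K ⊆ M ∧
      ∀ z ∈ K, ∃ f a b, a ≤ b ∧ IsArcOn M f a b ∧ f a = z ∧ f b = q ∧
        f '' Set.Icc a b ⊆ K := by
  rcases hy₀ with rfl | ⟨γ, a, b, hab, hγ, hγa, hγb⟩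
  · refine ⟨{y₀}, isClosed_singleton, rfl, by simpa using hy₀M, ?_⟩
    rintro z rfl
    refine ⟨fun _ => z, 0, 0, le_rfl, ⟨le_rfl, continuousOn_const, ?_, ?_⟩, rfl, rfl, ?_⟩
    · intro u hu u' hu' _
      simp only [Set.Icc_self, Set.mem_singleton_iff] at hu hu'
      rw [hu, hu']
    · rintro _ ⟨u, _, rfl⟩; exact hy₀M
    · rintro _ ⟨u, _, rfl⟩; exact rfl
  · refine ⟨γ '' Set.Icc a b, ?_, ⟨a, ⟨le_rfl, hab.le⟩, hγa⟩, hγ.sub, ?_⟩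
    · exact (isCompact_Icc.image_of_continuousOn hγ.cont).isClosed
    · rintro _ ⟨r, hr, rfl⟩
      refine ⟨γ, r, b, hr.2, hγ.subarc hr.2 (fun u hu => ⟨le_trans hr.1 hu.1, hu.2⟩),
        rfl, hγb, ?_⟩
      exact Set.image_mono (fun u hu => ⟨le_trans hr.1 hu.1, hu.2⟩)

/-- Any two distinct points of a compact connected 1-manifold are joined
by an arc inside it. -/
theorem arc_connected (hMan : IsCompactTopManifoldWithBoundary 1 M)
    (hconn : IsConnected M) {p q : E} (hp : p ∈ M) (hq : q ∈ M) (hpq : p ≠ q) :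
    ∃ (f : ℝ → E) (a b : ℝ), a < b ∧ IsArcOn M f a b ∧ f a = p ∧ f b = q := by
  classical
  set S : Set E := {x | x ∈ M ∧ (x = q ∨
    ∃ f a b, a < b ∧ IsArcOn M f a b ∧ f a = x ∧ f b = q)} with hS
  have key : ∀ x ∈ M, ∃ W₂ : Set E, IsOpen W₂ ∧ x ∈ W₂ ∧
      ((∃ y ∈ W₂ ∩ M, y ∈ S) → ∀ y ∈ W₂ ∩ M, y ∈ S) := by
    intro x hx
    obtain ⟨g, h, C, W, hWopen, hxW, hgC, hCconn, hhxC, hgcont, hhcont, hhg, hgh⟩ :=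
      exists_chart hMan hx
    refine ⟨W, hWopen, hxW, ?_⟩
    rintro ⟨y₀, hy₀A, hy₀S⟩ y hyA
    -- goal : y ∈ S
    by_cases hyq : y = q
    · exact ⟨hyA.2, Or.inl hyq⟩
    obtain ⟨K, hKclosed, hy₀K, hKM, hKroute⟩ :=
      route_exists hy₀S.1 hq hy₀S.2
    by_cases hyK : y ∈ K
    · obtain ⟨f, a, b, hab, hf, hfa, hfb, -⟩ := hKroute y hyK
      rcases lt_or_eq_of_le hab with hab' | hab'
      · exact ⟨hyA.2, Or.inr ⟨f, a, b, hab', hf, hfa, hfb⟩⟩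
      · exact absurd (by rw [← hfa, hab', hfb]) hyq
    -- y ∉ K : connect within the chart and take the first hit
    have hyy₀ : y ≠ y₀ := fun hh => hyK (hh ▸ hy₀K)
    have hyC : h y ∈ C := by
      rw [← hgC] at hyA
      rcases hyA with ⟨t, ht, rfl⟩
      rw [hhg t ht]; exact ht
    have hy₀C : h y₀ ∈ C := by
      rw [← hgC] at hy₀A
      rcases hy₀A with ⟨t, ht, rfl⟩
      rw [hhg t ht]; exact ht
    have hghy : g (h y) = y := hgh y hyA
    have hghy₀ : g (h y₀) = y₀ := hgh y₀ hy₀A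
    have hst : h y ≠ h y₀ := fun hh => hyy₀ (by rw [← hghy, hh, hghy₀])
    have hinj : ∀ t ∈ C, ∀ t' ∈ C, g t = g t' → t = t' := by
      intro t ht t' ht' htt
      rw [← hhg t ht, htt, hhg t' ht']
    obtain ⟨β, aβ, bβ, haβbβ, hβ, hβa, hβb, hβimg⟩ :=
      chart_arc hgC hCconn hgcont (Set.inter_subset_right) hinj hyC hy₀C hst
    rw [hghy] at hβa
    rw [hghy₀] at hβb
    obtain ⟨t₀, ht₀, hβt₀K, hbefore⟩ :=
      first_hit hβ hKclosed (hβb ▸ hy₀K) (hβa ▸ hyK)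
    obtain ⟨f, a', b', ha'b', hf, hfa', hfb', hfK⟩ := hKroute (β t₀) hβt₀K
    -- shift the tail to start at t₀
    set f₂ : ℝ → E := fun u => f (u - (t₀ - a')) with hf₂
    have hshift := hf.shift (t₀ - a')
    have hdom : a' + (t₀ - a') = t₀ := by ring
    rw [hdom] at hshift
    have hβp : IsArcOn M β aβ t₀ :=
      hβ.subarc ht₀.1.le (fun u hu => ⟨hu.1, le_trans hu.2 ht₀.2⟩)
    have hf₂img : f₂ '' Set.Icc t₀ (b' + (t₀ - a')) = f '' Set.Icc a' b' := by
      have h0 := shift_image f a' b' (t₀ - a')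
      rw [hdom] at h0
      exact h0
    have hmatch : β t₀ = f₂ t₀ := by
      rw [hf₂]; simp only [hdom]
      rw [show t₀ - (t₀ - a') = a' by ring, hfa']
    have hint : β '' Set.Icc aβ t₀ ∩ f₂ '' Set.Icc t₀ (b' + (t₀ - a')) ⊆ {β t₀} := by
      rintro z ⟨⟨u, hu, rfl⟩, hz2⟩
      rcases lt_or_eq_of_le hu.2 with hu' | hu'
      · exfalso
        apply hbefore u ⟨hu.1, hu'⟩
        exact hfK (by rw [← hf₂img]; exact hz2)
      · rw [hu']; rfl
    -- concatenate
    obtain ⟨hFarc, hFimg⟩ := hβp.concat hshift hmatch hint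
    refine ⟨hyA.2, Or.inr ⟨_, aβ, b' + (t₀ - a'), ?_, hFarc, ?_, ?_⟩⟩
    · have := ht₀.1
      have := ha'b'
      linarith
    · show (if aβ ≤ t₀ then β aβ else f₂ aβ) = y
      rw [if_pos ht₀.1.le]
      exact hβa
    · show (if b' + (t₀ - a') ≤ t₀ then β (b' + (t₀ - a')) else f₂ (b' + (t₀ - a'))) = q
      have hf₂end : f₂ (b' + (t₀ - a')) = q := by
        show f (b' + (t₀ - a') - (t₀ - a')) = q
        rw [show b' + (t₀ - a') - (t₀ - a') = b' by ring, hfb']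
      by_cases hend : b' + (t₀ - a') ≤ t₀
      · have hb'a' : b' = a' := le_antisymm (by linarith) ha'b'
        rw [if_pos hend]
        have hEq : b' + (t₀ - a') = t₀ := by rw [hb'a']; ring
        rw [hEq, hmatch]
        show f (t₀ - (t₀ - a')) = q
        rw [show t₀ - (t₀ - a') = a' by ring, ← hb'a', hfb']
      · rw [if_neg hend]; exact hf₂end
  -- the clopen argument
  haveI : ConnectedSpace M := isConnected_iff_connectedSpace.1 hconn
  set A : Set M := Subtype.val ⁻¹' S with hA
  have hAopen : IsOpen A := by
    apply isOpen_iff_forall_mem_open.2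
    rintro ⟨x, hxM⟩ hxA
    obtain ⟨W₂, hW₂open, hxW₂, hW₂prop⟩ := key x hxM
    refine ⟨Subtype.val ⁻¹' W₂, ?_, hW₂open.preimage continuous_subtype_val, hxW₂⟩
    rintro ⟨z, hzM⟩ hzW₂
    exact hW₂prop ⟨x, ⟨hxW₂, hxM⟩, hxA⟩ z ⟨hzW₂, hzM⟩
  have hAclosed : IsClosed A := by
    rw [← isOpen_compl_iff]
    apply isOpen_iff_forall_mem_open.2
    rintro ⟨x, hxM⟩ hxA
    obtain ⟨W₂, hW₂open, hxW₂, hW₂prop⟩ := key x hxM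
    refine ⟨Subtype.val ⁻¹' W₂, ?_, hW₂open.preimage continuous_subtype_val, hxW₂⟩
    rintro ⟨z, hzM⟩ hzW₂ hzA
    exact hxA (hW₂prop ⟨z, ⟨hzW₂, hzM⟩, hzA⟩ x ⟨hxW₂, hxM⟩)
  have hAne : A.Nonempty := ⟨⟨q, hq⟩, hq, Or.inl rfl⟩
  have hAuniv : A = Set.univ := IsClopen.eq_univ ⟨hAclosed, hAopen⟩ hAne
  have hpS : p ∈ S := by
    have : (⟨p, hp⟩ : M) ∈ A := by rw [hAuniv]; trivial
    exact this
  rcases hpS.2 with h | ⟨f, a, b, hab, hf, hfa, hfb⟩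
  · exact absurd h hpq
  · exact ⟨f, a, b, hab, hf, hfa, hfb⟩

/-- Extend an arc to pass through one more point. -/
theorem arc_extend (hMan : IsCompactTopManifoldWithBoundary 1 M)
    (hconn : IsConnected M) {α : ℝ → E} {a b : ℝ} (hα : IsArcOn M α a b)
    {p : E} (hp : p ∈ M) (hpα : p ∉ α '' Set.Icc a b) :
    ∃ f a' b', a' ≤ b' ∧ IsArcOn M f a' b' ∧
      α '' Set.Icc a b ∪ {p} ⊆ f '' Set.Icc a' b' := by
  have haM : α a ∈ M := hα.mem ⟨le_rfl, hα.le⟩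
  have hpa : p ≠ α a := fun hh => hpα (hh ▸ ⟨a, ⟨le_rfl, hα.le⟩, rfl⟩)
  obtain ⟨β, c, d, hcd, hβ, hβc, hβd⟩ := arc_connected hMan hconn hp haM hpa
  set K : Set E := α '' Set.Icc a b with hK
  have hKclosed : IsClosed K :=
    (isCompact_Icc.image_of_continuousOn hα.cont).isClosed
  have hβdK : β d ∈ K := hβd ▸ ⟨a, ⟨le_rfl, hα.le⟩, rfl⟩
  have hβcK : β c ∉ K := hβc ▸ hpα
  obtain ⟨t₀, ht₀, hβt₀K, hbefore⟩ := first_hit hβ hKclosed hβdK hβcK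
  obtain ⟨s, hs, hαs⟩ := hβt₀K
  have hβp : IsArcOn M β c t₀ :=
    hβ.subarc ht₀.1.le (fun u hu => ⟨hu.1, le_trans hu.2 ht₀.2⟩)
  have hsab : s = a ∨ s = b := by
    apply no_branch hMan hα hβp ht₀.1 hs hαs.symm
    intro t ht htK
    exact hbefore t ht htK
  -- pick an orientation of α starting at α s
  obtain ⟨δF, hδF, hδFimg, hδFa⟩ :
      ∃ δF, IsArcOn M δF a b ∧ δF '' Set.Icc a b = K ∧ δF a = α s := by
    rcases hsab with hsa | hsb
    · exact ⟨α, hα, rfl, by rw [hsa]⟩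
    · exact ⟨fun t => α (a + b - t), hα.reverse, reverse_image α a b hα.le,
        by show α (a + b - a) = α s; rw [show a + b - a = b by ring, hsb]⟩
  -- shift it to start at t₀
  set δ₂ : ℝ → E := fun u => δF (u - (t₀ - a)) with hδ₂
  have hshift := hδF.shift (t₀ - a)
  have hdom : a + (t₀ - a) = t₀ := by ring
  rw [hdom] at hshift
  have hδ₂img : δ₂ '' Set.Icc t₀ (b + (t₀ - a)) = K := by
    have h0 := shift_image δF a b (t₀ - a)
    rw [hdom] at h0
    rw [h0, hδFimg]
  have hmatch : β t₀ = δ₂ t₀ := by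
    show β t₀ = δF (t₀ - (t₀ - a))
    rw [show t₀ - (t₀ - a) = a by ring, hδFa, hαs]
  have hint : β '' Set.Icc c t₀ ∩ δ₂ '' Set.Icc t₀ (b + (t₀ - a)) ⊆ {β t₀} := by
    rintro z ⟨⟨u, hu, rfl⟩, hz2⟩
    rcases lt_or_eq_of_le hu.2 with hu' | hu'
    · exact absurd (hδ₂img ▸ hz2) (hbefore u ⟨hu.1, hu'⟩)
    · rw [hu']; rfl
  obtain ⟨hFarc, hFimg⟩ := hβp.concat hshift hmatch hint
  refine ⟨_, c, b + (t₀ - a), by linarith [ht₀.1, hα.le], hFarc, ?_⟩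
  rw [hFimg, hδ₂img]
  apply Set.union_subset
  · exact fun z hz => Or.inr hz
  · rintro z rfl
    exact Or.inl ⟨c, ⟨le_rfl, ht₀.1.le⟩, hβc⟩

/-- An arc through finitely many points of `M`. -/
theorem arc_through (hMan : IsCompactTopManifoldWithBoundary 1 M)
    (hconn : IsConnected M) (n : ℕ) (X : Fin n → E) (hX : ∀ i, X i ∈ M) :
    ∃ f a b, a ≤ b ∧ IsArcOn M f a b ∧ ∀ i, X i ∈ f '' Set.Icc a b := by
  induction n with
  | zero =>
    obtain ⟨x₀, hx₀⟩ := hconn.nonempty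
    refine ⟨fun _ => x₀, 0, 0, le_rfl, ⟨le_rfl, continuousOn_const, ?_, ?_⟩, ?_⟩
    · intro u hu u' hu' _
      simp only [Set.Icc_self, Set.mem_singleton_iff] at hu hu'
      rw [hu, hu']
    · rintro _ ⟨u, _, rfl⟩; exact hx₀
    · exact fun i => i.elim0
  | succ n ih =>
    obtain ⟨f, a, b, hab, hf, hfX⟩ := ih (X ∘ Fin.castSucc) (fun i => hX _)
    by_cases hp : X (Fin.last n) ∈ f '' Set.Icc a b
    · refine ⟨f, a, b, hab, hf, ?_⟩
      intro i
      induction i using Fin.lastCases with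
      | last => exact hp
      | cast j => exact hfX j
    · obtain ⟨f', a', b', hab', hf', hsub⟩ :=
        arc_extend hMan hconn hf (hX (Fin.last n)) hp
      refine ⟨f', a', b', hab', hf', ?_⟩
      intro i
      induction i using Fin.lastCases with
      | last => exact hsub (Or.inr rfl)
      | cast j => exact hsub (Or.inl (hfX j))
 
end Topo

section Measure

theorem norm_sub_le_hausdorff {m : ℕ} {S : Set (EuclideanSpace ℝ (Fin m))}
    (hS : IsPreconnected S) {x y : EuclideanSpace ℝ (Fin m)}
    (hx : x ∈ S) (hy : y ∈ S) :
    ENNReal.ofReal ‖x - y‖ ≤ μH[(1 : ℝ)] S := by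
  rcases eq_or_ne x y with rfl | hxy
  · simp
  have hnorm : (0 : ℝ) < ‖x - y‖ := norm_pos_iff.2 (sub_ne_zero.2 hxy)
  set u : EuclideanSpace ℝ (Fin m) := ‖x - y‖⁻¹ • (x - y) with hu
  have hunorm : ‖u‖ = 1 := by
    rw [hu, norm_smul, norm_inv, norm_norm, inv_mul_cancel₀ hnorm.ne']
  have hlip : LipschitzWith 1 (fun z : EuclideanSpace ℝ (Fin m) => (inner ℝ u z : ℝ)) := by
    apply LipschitzWith.of_dist_le_mul
    intro z w
    rw [Real.dist_eq, dist_eq_norm]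
    have h1 : (inner ℝ u z : ℝ) - (inner ℝ u w : ℝ) = (inner ℝ u (z - w) : ℝ) := by
      rw [inner_sub_right]
    rw [h1]
    have h2 : |(inner ℝ u (z - w) : ℝ)| ≤ ‖z - w‖ := by
      have h3 := abs_real_inner_le_norm u (z - w)
      rwa [hunorm, one_mul] at h3
    simpa using h2
  have himg : μH[(1 : ℝ)] ((fun z : EuclideanSpace ℝ (Fin m) => (inner ℝ u z : ℝ)) '' S)
      ≤ μH[(1 : ℝ)] S := by
    have h0 := hlip.hausdorffMeasure_image_le (le_of_lt one_pos) S
    simpa using h0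
  have hdiff : (inner ℝ u x : ℝ) - (inner ℝ u y : ℝ) = ‖x - y‖ := by
    have h1 : (inner ℝ u x : ℝ) - (inner ℝ u y : ℝ) = (inner ℝ u (x - y) : ℝ) := by
      rw [inner_sub_right]
    rw [h1, hu, real_inner_smul_left, real_inner_self_eq_norm_sq]
    field_simp
  have hIcc : Set.Icc ((inner ℝ u y : ℝ)) ((inner ℝ u x : ℝ))
      ⊆ (fun z : EuclideanSpace ℝ (Fin m) => (inner ℝ u z : ℝ)) '' S :=
    (hS.image _ hlip.continuous.continuousOn).Icc_subset ⟨y, hy, rfl⟩ ⟨x, hx, rfl⟩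
  calc ENNReal.ofReal ‖x - y‖
      = μH[(1 : ℝ)] (Set.Icc ((inner ℝ u y : ℝ)) ((inner ℝ u x : ℝ))) := by
        rw [show (μH[(1 : ℝ)] : Measure ℝ) = volume from
          MeasureTheory.hausdorffMeasure_real, Real.volume_Icc, hdiff]
    _ ≤ μH[(1 : ℝ)] ((fun z : EuclideanSpace ℝ (Fin m) => (inner ℝ u z : ℝ)) '' S) :=
        measure_mono hIcc
    _ ≤ μH[(1 : ℝ)] S := himg

theorem hausdorff_singleton_zero {m : ℕ} (z : EuclideanSpace ℝ (Fin m)) :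
    μH[(1 : ℝ)] ({z} : Set (EuclideanSpace ℝ (Fin m))) = 0 := by
  have h0 := hausdorffMeasure_of_dimH_lt
    (s := ({z} : Set (EuclideanSpace ℝ (Fin m)))) (d := 1)
    (by rw [dimH_singleton]; norm_num)
  simpa using h0

end Measure
end TSPAux

/-- Traveling-salesman bound on a one-dimensional manifold (Lemma 3.2 for
`d₁ = 1`): if `M ⊆ ℝ^m` is a compact connected topological `1`-manifold with
boundary with `H¹(M) < ∞` and `X_1, …, X_n ∈ M`, then some ordering `σ` of the
points satisfies `Σ_{i=1}^{n-1} ‖X_{σ(i+1)} - X_{σ(i)}‖ ≤ H¹(M)`. -/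
theorem tsp_path_le_hausdorff_measure_of_one_manifold
    (m n : ℕ) (M : Set (EuclideanSpace ℝ (Fin m)))
    (hMan : IsCompactTopManifoldWithBoundary 1 M)
    (hconn : IsConnected M)
    (hfin : μH[(1 : ℝ)] M < ⊤)
    (X : Fin n → EuclideanSpace ℝ (Fin m)) (hX : ∀ i, X i ∈ M) :
    ∃ σ : Equiv.Perm (Fin n),
      ENNReal.ofReal (pathLength (X ∘ σ)) ≤ μH[(1 : ℝ)] M := by
  classical
  obtain ⟨f, a, b, hab, hf, hfX⟩ := TSPAux.arc_through hMan hconn n X hX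
  choose t ht hft using fun i => hfX i
  set σ : Equiv.Perm (Fin n) := Tuple.sort t with hσ
  have hmono : Monotone (t ∘ σ) := Tuple.monotone_sort t
  set nxt : Fin n → Fin n :=
    fun i => if h : (i : ℕ) + 1 < n then ⟨(i : ℕ) + 1, h⟩ else i with hnxt
  have hinext : ∀ i, i ≤ nxt i := by
    intro i
    simp only [hnxt]
    by_cases h : (i : ℕ) + 1 < n
    · rw [dif_pos h]; exact Fin.le_def.2 (Nat.le_succ _)
    · rw [dif_neg h]
  have hnextle : ∀ i j : Fin n, i < j → nxt i ≤ j := by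
    intro i j hij
    simp only [hnxt]
    by_cases h : (i : ℕ) + 1 < n
    · rw [dif_pos h]; exact Fin.le_def.2 (Fin.lt_def.1 hij)
    · rw [dif_neg h]; exact hij.le
  set C : Fin n → Set (EuclideanSpace ℝ (Fin m)) :=
    fun i => f '' Set.Icc (t (σ i)) (t (σ (nxt i))) with hC
  have hIccsub : ∀ i, Set.Icc (t (σ i)) (t (σ (nxt i))) ⊆ Set.Icc a b := by
    intro i z hz
    exact ⟨le_trans (ht (σ i)).1 hz.1, le_trans hz.2 (ht (σ (nxt i))).2⟩
  have hCsubM : ∀ i, C i ⊆ M := fun i =>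
    (Set.image_mono (f := f) (hIccsub i)).trans hf.sub
  have hCconn : ∀ i, IsPreconnected (C i) := fun i =>
    isPreconnected_Icc.image f (hf.cont.mono (hIccsub i))
  have hCcompact : ∀ i, IsCompact (C i) := fun i =>
    isCompact_Icc.image_of_continuousOn (hf.cont.mono (hIccsub i))
  have hdisj : ∀ i j : Fin n, i ≠ j → μH[(1 : ℝ)] (C i ∩ C j) = 0 := by
    have key : ∀ i j : Fin n, i < j → μH[(1 : ℝ)] (C i ∩ C j) = 0 := by
      intro i j hij
      have h1 : C i ∩ C j = f '' (Set.Icc (t (σ i)) (t (σ (nxt i)))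
          ∩ Set.Icc (t (σ j)) (t (σ (nxt j)))) :=
        (hf.inj.image_inter (hIccsub i) (hIccsub j)).symm
      have h2 : Set.Icc (t (σ i)) (t (σ (nxt i)))
          ∩ Set.Icc (t (σ j)) (t (σ (nxt j))) ⊆ {t (σ j)} := by
        rintro z ⟨hz1, hz2⟩
        have hle : t (σ (nxt i)) ≤ t (σ j) := hmono (hnextle i j hij)
        exact Set.mem_singleton_iff.2 (le_antisymm (le_trans hz1.2 hle) hz2.1)
      have h3 : C i ∩ C j ⊆ {f (t (σ j))} := by
        rw [h1]
        refine (Set.image_mono (f := f) h2).trans ?_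
        rw [Set.image_singleton]
      exact le_antisymm
        (le_trans (measure_mono h3) (TSPAux.hausdorff_singleton_zero _).le)
        (zero_le)
    intro i j hij
    rcases hij.lt_or_gt with h | h
    · exact key i j h
    · rw [Set.inter_comm]; exact key j i h
  refine ⟨σ, ?_⟩
  have hterm : ∀ i : Fin n,
      ENNReal.ofReal (if h : (i : ℕ) + 1 < n then
        ‖(X ∘ σ) ⟨(i : ℕ) + 1, h⟩ - (X ∘ σ) i‖ else 0) ≤ μH[(1 : ℝ)] (C i) := by
    intro i
    by_cases h : (i : ℕ) + 1 < n
    · rw [dif_pos h]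
      have hnxti : nxt i = ⟨(i : ℕ) + 1, h⟩ := by simp only [hnxt]; exact dif_pos h
      have hx1 : (X ∘ σ) ⟨(i : ℕ) + 1, h⟩ = f (t (σ (nxt i))) := by
        rw [hnxti]
        exact (hft (σ ⟨(i : ℕ) + 1, h⟩)).symm
      have hx2 : (X ∘ σ) i = f (t (σ i)) := (hft (σ i)).symm
      rw [hx1, hx2]
      exact TSPAux.norm_sub_le_hausdorff (hCconn i)
        ⟨t (σ (nxt i)), ⟨hmono (hinext i), le_rfl⟩, rfl⟩
        ⟨t (σ i), ⟨le_rfl, hmono (hinext i)⟩, rfl⟩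
    · rw [dif_neg h]
      simp
  have hPL : pathLength (X ∘ σ) = ∑ i : Fin n,
      if h : (i : ℕ) + 1 < n then ‖(X ∘ σ) ⟨(i : ℕ) + 1, h⟩ - (X ∘ σ) i‖ else 0 := rfl
  calc ENNReal.ofReal (pathLength (X ∘ σ))
      = ∑ i : Fin n, ENNReal.ofReal (if h : (i : ℕ) + 1 < n then
          ‖(X ∘ σ) ⟨(i : ℕ) + 1, h⟩ - (X ∘ σ) i‖ else 0) := by
        rw [hPL]
        apply ENNReal.ofReal_sum_of_nonneg
        intro i _
        by_cases h : (i : ℕ) + 1 < n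
        · rw [dif_pos h]; exact norm_nonneg _
        · rw [dif_neg h]
    _ ≤ ∑ i : Fin n, μH[(1 : ℝ)] (C i) := Finset.sum_le_sum fun i _ => hterm i
    _ = μH[(1 : ℝ)] (⋃ i ∈ Finset.univ, C i) := by
        refine (measure_biUnion_finset₀ ?_ ?_).symm
        · intro i _ j _ hij
          exact hdisj i j hij
        · exact fun i _ => (hCcompact i).isClosed.measurableSet.nullMeasurableSet
    _ ≤ μH[(1 : ℝ)] M := by
        apply measure_mono
        exact Set.iUnion₂_subset fun i _ => hCsubM i


end
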